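/- Let G = (V,E) be a graph on n vertices for which there exists no induced subgraph on at least m vertices that is an ε-expander. Then for every subset B ⊆ V with |B| ≥ (3/2)m, the induced subgraph G[B] contains a nonempty subset U with |U| ≤ (3/2)m and |∂_{G[B]} U| ≤ c·ε·log(n)·|U|, where c is a universal constant. -/

import Mathlib

open Finset

variable {V : Type*} [Fintype V] [DecidableEq V]

/-- Number of edges of `G` with one endpoint in `A` and the other in `W` (for disjoint `A`, `W`),
counted as ordered pairs, hence exactly once per edge. -/
def bdryTo (G : SimpleGraph V) [DecidableRel G.Adj] (A W : Finset V) : ℕ :=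
  ((A ×ˢ W).filter fun p => G.Adj p.1 p.2).card

/-- Number of boundary edges of `A` inside the induced subgraph `G[B]`:
edges of `G` with one endpoint in `A` and the other in `B \ A`. -/
def bdryIn (G : SimpleGraph V) [DecidableRel G.Adj] (B A : Finset V) : ℕ :=
  bdryTo G A (B \ A)

/-- The induced subgraph `G[U]` is an `ε`-expander: every `W ⊆ U` with `|W| ≤ |U|/2`
has at least `ε|W|` boundary edges inside `G[U]`. -/
def IsExpanderOn (G : SimpleGraph V) [DecidableRel G.Adj] (U : Finset V) (ε : ℝ) : Prop :=
  ∀ W ⊆ U, 2 * W.card ≤ U.card → ε * W.card ≤ (bdryIn G U W : ℝ)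

lemma bdryTo_comm (G : SimpleGraph V) [DecidableRel G.Adj] (A W : Finset V) :
    bdryTo G A W = bdryTo G W A := by
  unfold bdryTo
  apply Finset.card_bij (fun p _ => (p.2, p.1))
  · intro p hp
    simp only [mem_filter, mem_product] at hp ⊢
    exact ⟨⟨hp.1.2, hp.1.1⟩, hp.2.symm⟩
  · intro p hp q hq h
    have h1 : p.2 = q.2 := congrArg Prod.fst h
    have h2 : p.1 = q.1 := congrArg Prod.snd h
    exact Prod.ext h2 h1
  · intro p hp
    refine ⟨(p.2, p.1), ?_, rfl⟩
    simp only [mem_filter, mem_product] at hp ⊢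
    exact ⟨⟨hp.1.2, hp.1.1⟩, hp.2.symm⟩

lemma bdryTo_union_right (G : SimpleGraph V) [DecidableRel G.Adj] (A W₁ W₂ : Finset V)
    (h : Disjoint W₁ W₂) : bdryTo G A (W₁ ∪ W₂) = bdryTo G A W₁ + bdryTo G A W₂ := by
  unfold bdryTo
  rw [product_union, filter_union, card_union_of_disjoint]
  refine disjoint_filter_filter ?_
  rw [Finset.disjoint_left]
  intro p hp hq
  simp only [mem_product] at hp hq
  exact (Finset.disjoint_left.mp h hp.2) hq.2

lemma bdryTo_union_left (G : SimpleGraph V) [DecidableRel G.Adj] (A₁ A₂ W : Finset V)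
    (h : Disjoint A₁ A₂) : bdryTo G (A₁ ∪ A₂) W = bdryTo G A₁ W + bdryTo G A₂ W := by
  rw [bdryTo_comm, bdryTo_union_right G W A₁ A₂ h, bdryTo_comm G W A₁, bdryTo_comm G W A₂]

/-- Key counting identity: for `W ⊆ C ⊆ B`,
`∂_B(W) + ∂_B(C\W) = ∂_B(C) + 2·∂_C(W)`. -/
lemma bdry_split (G : SimpleGraph V) [DecidableRel G.Adj] {W C B : Finset V}
    (hWC : W ⊆ C) (hCB : C ⊆ B) :
    bdryIn G B W + bdryIn G B (C \ W) = bdryIn G B C + 2 * bdryIn G C W := by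
  have hsub : ∀ x ∈ W, x ∈ B := fun x hx => hCB (hWC hx)
  have e1 : B \ W = (C \ W) ∪ (B \ C) := by
    ext x
    simp only [mem_sdiff, mem_union]
    constructor
    · rintro ⟨hB, hW⟩
      by_cases hC : x ∈ C
      · exact Or.inl ⟨hC, hW⟩
      · exact Or.inr ⟨hB, hC⟩
    · rintro (⟨hC, hW⟩ | ⟨hB, hC⟩)
      · exact ⟨hCB hC, hW⟩
      · exact ⟨hB, fun hx => hC (hWC hx)⟩
  have e2 : B \ (C \ W) = W ∪ (B \ C) := by
    ext x
    simp only [mem_sdiff, mem_union, not_and, not_not]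
    constructor
    · rintro ⟨hB, h⟩
      by_cases hC : x ∈ C
      · exact Or.inl (h hC)
      · exact Or.inr ⟨hB, hC⟩
    · rintro (hW | ⟨hB, hC⟩)
      · exact ⟨hsub _ hW, fun _ => hW⟩
      · exact ⟨hB, fun hx => absurd hx hC⟩
  have d1 : Disjoint (C \ W) (B \ C) := by
    rw [Finset.disjoint_left]; intro a ha hb
    exact (mem_sdiff.mp hb).2 (mem_sdiff.mp ha).1
  have d2 : Disjoint W (B \ C) := by
    rw [Finset.disjoint_left]; intro a ha hb
    exact (mem_sdiff.mp hb).2 (hWC ha)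
  have d3 : Disjoint W (C \ W) := by
    rw [Finset.disjoint_left]; intro a ha hb
    exact (mem_sdiff.mp hb).2 ha
  have eC : W ∪ (C \ W) = C := Finset.union_sdiff_of_subset hWC
  unfold bdryIn
  have q1 : bdryTo G W (B \ W) = bdryTo G W (C \ W) + bdryTo G W (B \ C) := by
    rw [e1, bdryTo_union_right G W _ _ d1]
  have q2 : bdryTo G (C \ W) (B \ (C \ W)) = bdryTo G W (C \ W) + bdryTo G (C \ W) (B \ C) := by
    rw [e2, bdryTo_union_right G (C \ W) _ _ d2, bdryTo_comm G (C \ W) W]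
  have q3 : bdryTo G C (B \ C) = bdryTo G W (B \ C) + bdryTo G (C \ W) (B \ C) := by
    rw [← bdryTo_union_left G W (C \ W) (B \ C) d3, eC]
  omega

lemma log_ineq {w c' : ℝ} (hw : 1 ≤ w) (hwc : w ≤ c') :
    w * Real.log w + c' * Real.log c' + Real.log 2 * w ≤ (w + c') * Real.log (w + c') := by
  have hw0 : (0:ℝ) < w := lt_of_lt_of_le one_pos hw
  have hc0 : (0:ℝ) < c' := lt_of_lt_of_le hw0 hwc
  have h1 : Real.log w + Real.log 2 ≤ Real.log (w + c') := by
    rw [← Real.log_mul hw0.ne' two_ne_zero]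
    exact Real.log_le_log (by positivity) (by linarith)
  have h2 : Real.log c' ≤ Real.log (w + c') := Real.log_le_log hc0 (by linarith)
  calc w * Real.log w + c' * Real.log c' + Real.log 2 * w
      = w * (Real.log w + Real.log 2) + c' * Real.log c' := by ring
    _ ≤ w * Real.log (w + c') + c' * Real.log (w + c') :=
        add_le_add (mul_le_mul_of_nonneg_left h1 hw0.le) (mul_le_mul_of_nonneg_left h2 hc0.le)
    _ = (w + c') * Real.log (w + c') := by ring

set_option maxHeartbeats 1000000 in
/-- Main induction: inside any nonempty `C ⊆ B` there is a small set with relatively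
small boundary (weighted-averaging form). -/
lemma main_ind (G : SimpleGraph V) [DecidableRel G.Adj] (m : ℕ) (ε : ℝ) (hε : 0 < ε)
    (hno : ∀ C : Finset V, m ≤ C.card → ¬ IsExpanderOn G C ε) (B : Finset V) :
    ∀ n : ℕ, ∀ C : Finset V, C.card ≤ n → C ⊆ B → C.Nonempty →
      ∃ U ⊆ C, U.Nonempty ∧ U.card < m ∧
        (C.card : ℝ) * (bdryIn G B U : ℝ) ≤
          ((bdryIn G B C : ℝ) + (2 / Real.log 2) * ε * C.card * Real.log C.card) * U.card := by
  intro n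
  induction n with
  | zero =>
    intro C hC hCB hne
    exact absurd (Finset.card_eq_zero.mp (Nat.le_zero.mp hC)) hne.ne_empty
  | succ n ih =>
    intro C hC hCB hne
    have hCpos : 0 < C.card := Finset.card_pos.mpr hne
    have hlogC : 0 ≤ Real.log C.card :=
      Real.log_nonneg (by exact_mod_cast hCpos)
    by_cases hm : C.card < m
    · -- base case: C itself is small
      refine ⟨C, subset_rfl, hne, hm, ?_⟩
      have h0 : (0:ℝ) ≤ (2 / Real.log 2) * ε * C.card * Real.log C.card := by
        have h2 : (0:ℝ) < Real.log 2 := Real.log_pos (by norm_num)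
        positivity
      nlinarith [(by positivity : (0:ℝ) ≤ (bdryIn G B C : ℝ)), (by exact_mod_cast hCpos : (0:ℝ) < (C.card:ℝ))]
    · push_neg at hm
      have hnotexp := hno C hm
      unfold IsExpanderOn at hnotexp
      push_neg at hnotexp
      obtain ⟨W, hWC, hWhalf, hcut⟩ := hnotexp
      -- W is nonempty
      have hWne : W.Nonempty := by
        rw [Finset.nonempty_iff_ne_empty]
        rintro rfl
        simp at hcut
        exact absurd hcut (not_lt.mpr (Nat.cast_nonneg _))
      have hWpos : 0 < W.card := Finset.card_pos.mpr hWne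
      set C' := C \ W with hC'
      have hcard : C'.card + W.card = C.card := Finset.card_sdiff_add_card_eq_card hWC
      have hC'pos : 0 < C'.card := by omega
      have hC'ne : C'.Nonempty := Finset.card_pos.mp hC'pos
      have hwle : W.card ≤ C'.card := by omega
      have hWcard_lt : W.card < C.card := by omega
      have hC'card_lt : C'.card < C.card := by omega
      have hWB : W ⊆ B := hWC.trans hCB
      have hC'B : C' ⊆ B := (Finset.sdiff_subset).trans hCB
      obtain ⟨U₁, hU₁W, hU₁ne, hU₁m, hineq₁⟩ := ih W (by omega) hWB hWne
      obtain ⟨U₂, hU₂C', hU₂ne, hU₂m, hineq₂⟩ := ih C' (by omega) hC'B hC'ne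
      -- notation
      set κ : ℝ := 2 / Real.log 2 with hκ
      have hlog2 : (0:ℝ) < Real.log 2 := Real.log_pos (by norm_num)
      have hκpos : 0 < κ := by positivity
      set w : ℝ := (W.card : ℝ) with hwdef
      set c' : ℝ := (C'.card : ℝ) with hc'def
      set cc : ℝ := (C.card : ℝ) with hccdef
      have hsum : w + c' = cc := by
        rw [hwdef, hc'def, hccdef]
        have : W.card + C'.card = C.card := by omega
        exact_mod_cast this
      have hw1 : (1:ℝ) ≤ w := by rw [hwdef]; exact_mod_cast (by omega : 1 ≤ W.card)
      have hwc' : w ≤ c' := by rw [hwdef, hc'def]; exact_mod_cast hwle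
      -- key potential inequality
      have hsplit : (bdryIn G B W : ℝ) + (bdryIn G B C' : ℝ)
          = (bdryIn G B C : ℝ) + 2 * (bdryIn G C W : ℝ) := by
        have h := bdry_split G hWC hCB
        exact_mod_cast h
      have hlogineq := log_ineq hw1 hwc'
      have hkey : ((bdryIn G B W : ℝ) + κ * ε * w * Real.log w)
          + ((bdryIn G B C' : ℝ) + κ * ε * c' * Real.log c')
          ≤ (bdryIn G B C : ℝ) + κ * ε * cc * Real.log cc := by
        have hc : (bdryIn G C W : ℝ) < ε * w := hcut
        have hmul : κ * ε * (w * Real.log w + c' * Real.log c' + Real.log 2 * w)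
            ≤ κ * ε * ((w + c') * Real.log (w + c')) :=
          mul_le_mul_of_nonneg_left hlogineq (by positivity)
        have hlw : κ * ε * (Real.log 2 * w) = 2 * (ε * w) := by
          rw [hκ]; field_simp
        rw [hsum] at hmul
        have hmul' : κ * ε * (w * Real.log w) + κ * ε * (c' * Real.log c') + 2 * (ε * w)
            ≤ κ * ε * (cc * Real.log cc) := by linarith [hmul, hlw]
        nlinarith [hmul', hc, hsplit]
      -- mediant step
      set x₁ : ℝ := (bdryIn G B U₁ : ℝ) with hx₁
      set x₂ : ℝ := (bdryIn G B U₂ : ℝ) with hx₂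
      set u₁ : ℝ := (U₁.card : ℝ) with hu₁
      set u₂ : ℝ := (U₂.card : ℝ) with hu₂
      have hu₁pos : (0:ℝ) < u₁ := by rw [hu₁]; exact_mod_cast Finset.card_pos.mpr hU₁ne
      have hu₂pos : (0:ℝ) < u₂ := by rw [hu₂]; exact_mod_cast Finset.card_pos.mpr hU₂ne
      set A₁ : ℝ := (bdryIn G B W : ℝ) + κ * ε * w * Real.log w with hA₁
      set A₂ : ℝ := (bdryIn G B C' : ℝ) + κ * ε * c' * Real.log c' with hA₂
      have hA₁nn : 0 ≤ A₁ := by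
        have : (0:ℝ) ≤ Real.log w := Real.log_nonneg hw1
        have : (0:ℝ) ≤ κ * ε * w * Real.log w := by positivity
        have hb : (0:ℝ) ≤ (bdryIn G B W : ℝ) := Nat.cast_nonneg _
        linarith
      have hA₂nn : 0 ≤ A₂ := by
        have h1 : (1:ℝ) ≤ c' := le_trans hw1 hwc'
        have : (0:ℝ) ≤ Real.log c' := Real.log_nonneg h1
        have : (0:ℝ) ≤ κ * ε * c' * Real.log c' := by positivity
        have hb : (0:ℝ) ≤ (bdryIn G B C' : ℝ) := Nat.cast_nonneg _
        linarith
      have h₁' : w * x₁ ≤ A₁ * u₁ := hineq₁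
      have h₂' : c' * x₂ ≤ A₂ * u₂ := hineq₂
      rcases le_total (x₁ * u₂) (x₂ * u₁) with hcmp | hcmp
      · refine ⟨U₁, hU₁W.trans hWC, hU₁ne, hU₁m, ?_⟩
        have step : c' * x₁ ≤ A₂ * u₁ := by
          have hc'0 : (0:ℝ) ≤ c' := by linarith [hw1, hwc']
          have t1 : c' * (x₁ * u₂) ≤ c' * (x₂ * u₁) := mul_le_mul_of_nonneg_left hcmp hc'0
          have t2 : (c' * x₂) * u₁ ≤ (A₂ * u₂) * u₁ := mul_le_mul_of_nonneg_right h₂' hu₁pos.le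
          have t3 : (c' * x₁) * u₂ ≤ (A₂ * u₁) * u₂ := by linarith [t1, t2]
          exact le_of_mul_le_mul_right t3 hu₂pos
        have hccx : cc * x₁ = w * x₁ + c' * x₁ := by rw [← hsum]; ring
        have : cc * x₁ ≤ (A₁ + A₂) * u₁ := by
          rw [hccx]; linarith [h₁', step]
        calc cc * x₁ ≤ (A₁ + A₂) * u₁ := this
          _ ≤ ((bdryIn G B C : ℝ) + κ * ε * cc * Real.log cc) * u₁ :=
              mul_le_mul_of_nonneg_right hkey hu₁pos.le
      · refine ⟨U₂, hU₂C'.trans Finset.sdiff_subset, hU₂ne, hU₂m, ?_⟩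
        have step : w * x₂ ≤ A₁ * u₂ := by
          have hw0 : (0:ℝ) ≤ w := by linarith
          have t1 : w * (x₂ * u₁) ≤ w * (x₁ * u₂) := mul_le_mul_of_nonneg_left hcmp hw0
          have t2 : (w * x₁) * u₂ ≤ (A₁ * u₁) * u₂ := mul_le_mul_of_nonneg_right h₁' hu₂pos.le
          have t3 : (w * x₂) * u₁ ≤ (A₁ * u₂) * u₁ := by linarith [t1, t2]
          exact le_of_mul_le_mul_right t3 hu₁pos
        have hccx : cc * x₂ = w * x₂ + c' * x₂ := by rw [← hsum]; ring
        have : cc * x₂ ≤ (A₁ + A₂) * u₂ := by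
          rw [hccx]; linarith [h₂', step]
        calc cc * x₂ ≤ (A₁ + A₂) * u₂ := this
          _ ≤ ((bdryIn G B C : ℝ) + κ * ε * cc * Real.log cc) * u₂ :=
              mul_le_mul_of_nonneg_right hkey hu₂pos.le

set_option maxHeartbeats 1000000 in
/-- Expansion concentration, contrapositive form: if no induced subgraph of `G` on at least `m`
vertices is an `ε`-expander, then every `B` with `|B| ≥ (3/2)m` contains a nonempty `U` with
`|U| ≤ (3/2)m` and `|∂_{G[B]} U| ≤ c·ε·log(n)·|U|`, for a universal constant `c`. -/
theorem stmt5 : ∃ c : ℝ, 0 < c ∧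
    ∀ (V : Type) (_ : Fintype V) (_ : DecidableEq V)
      (G : SimpleGraph V) (_ : DecidableRel G.Adj) (m : ℕ) (ε : ℝ), 0 ≤ ε →
      (¬ ∃ U : Finset V, m ≤ U.card ∧ IsExpanderOn G U ε) →
      ∀ B : Finset V, 3 * m ≤ 2 * B.card →
        ∃ U ⊆ B, U.Nonempty ∧ 2 * U.card ≤ 3 * m ∧
          (bdryIn G B U : ℝ) ≤ c * ε * Real.log (Fintype.card V) * U.card := by
  refine ⟨3, by norm_num, ?_⟩
  intro V _ _ G _ m ε hε0 hno B hB
  -- degenerate case m = 0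
  rcases Nat.eq_zero_or_pos m with rfl | hm
  · exact absurd ⟨∅, le_refl 0, by
      intro W hW h2
      have : W = ∅ := Finset.subset_empty.mp hW
      subst this
      simp⟩ hno
  -- degenerate case ε = 0
  rcases eq_or_lt_of_le hε0 with rfl | hε
  · exact absurd ⟨B, by omega, by
      intro W hW h2
      simp [Nat.cast_nonneg]⟩ hno
  have hno' : ∀ C : Finset V, m ≤ C.card → ¬ IsExpanderOn G C ε :=
    fun C h hE => hno ⟨C, h, hE⟩
  have hBcard : 2 ≤ B.card := by omega
  have hBne : B.Nonempty := Finset.card_pos.mp (by omega)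
  obtain ⟨U, hUB, hUne, hUm, hineq⟩ :=
    main_ind G m ε hε hno' B B.card B le_rfl subset_rfl hBne
  refine ⟨U, hUB, hUne, by omega, ?_⟩
  have hbb0 : (bdryIn G B B : ℝ) = 0 := by
    simp [bdryIn, bdryTo, sdiff_self]
  rw [hbb0] at hineq
  have hlog2 : (0:ℝ) < Real.log 2 := Real.log_pos (by norm_num)
  have hκ3 : 2 / Real.log 2 ≤ 3 := by
    rw [div_le_iff₀ hlog2]
    nlinarith [Real.log_two_gt_d9]
  have hBpos : (0:ℝ) < (B.card : ℝ) := by exact_mod_cast (by omega : 0 < B.card)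
  have hlogB : (0:ℝ) ≤ Real.log B.card := Real.log_nonneg (by exact_mod_cast (by omega : 1 ≤ B.card))
  have hBlen : Real.log (B.card : ℝ) ≤ Real.log (Fintype.card V : ℝ) := by
    apply Real.log_le_log hBpos
    exact_mod_cast Finset.card_le_univ B
  have hlogn : (0:ℝ) ≤ Real.log (Fintype.card V : ℝ) := le_trans hlogB hBlen
  have hUcard : (0:ℝ) ≤ (U.card : ℝ) := Nat.cast_nonneg _
  -- from hineq: B.card * bdry ≤ (0 + κ ε B.card log B.card) * U.card
  have key : (bdryIn G B U : ℝ) ≤ (2 / Real.log 2) * ε * Real.log B.card * U.card := by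
    have h := hineq
    rw [zero_add] at h
    have e : ((2 / Real.log 2) * ε * (B.card : ℝ) * Real.log B.card) * U.card
        = (B.card : ℝ) * ((2 / Real.log 2) * ε * Real.log B.card * U.card) := by ring
    rw [e] at h
    exact le_of_mul_le_mul_left h hBpos
  calc (bdryIn G B U : ℝ) ≤ (2 / Real.log 2) * ε * Real.log B.card * U.card := key
    _ ≤ 3 * ε * Real.log (Fintype.card V) * U.card := by
        apply mul_le_mul_of_nonneg_right _ hUcard
        have h1 : (2 / Real.log 2) * Real.log (B.card : ℝ) ≤ 3 * Real.log (Fintype.card V : ℝ) := by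
          calc (2 / Real.log 2) * Real.log (B.card : ℝ) ≤ 3 * Real.log (B.card : ℝ) :=
                mul_le_mul_of_nonneg_right hκ3 hlogB
            _ ≤ 3 * Real.log (Fintype.card V : ℝ) := by linarith
        have h2 := mul_le_mul_of_nonneg_left h1 hε.le
        nlinarith [h2]
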